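/- If d ≥ g + k, the positive L'-tableaux with parameters (g,d,k) having no blue 1 in the bottom row are in bijection with binary sequences of length g; in particular there are 2^g of them. -/

import Mathlib

/-- A cell of an L'-tableau: red with a value, blue with a value, or gray. -/
inductive LpCell : Type where
  | red (v : ℕ) : LpCell
  | blue (v : ℕ) : LpCell
  | gray : LpCell
deriving DecidableEq

/-- A positive L'-tableau with parameters (g,d,k): a filling of the 2×(d−1) grid
with a standard Young tableau of size g in the lower-left corner (red), the k−1
rightmost boxes of the top row gray, and a {0,1} semistandard skew filling of the
remaining boxes (blue). Row 0 is the bottom row. -/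
structure PosLpTableau (g d k : ℕ) where
  entry : Fin 2 → Fin (d-1) → LpCell
  gray_iff : ∀ (i : Fin 2) (j : Fin (d-1)),
    entry i j = LpCell.gray ↔ (i = 1 ∧ (d-1) - (k-1) ≤ (j : ℕ))
  red_left : ∀ (i : Fin 2) (j j' : Fin (d-1)) (v : ℕ),
    entry i j = LpCell.red v → j' ≤ j → ∃ w, entry i j' = LpCell.red w
  red_down : ∀ (i i' : Fin 2) (j : Fin (d-1)) (v : ℕ),
    entry i j = LpCell.red v → i' ≤ i → ∃ w, entry i' j = LpCell.red w
  red_vals : ∀ (i : Fin 2) (j : Fin (d-1)) (v : ℕ), entry i j = LpCell.red v → 1 ≤ v ∧ v ≤ g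
  red_content : ∀ v : ℕ, 1 ≤ v → v ≤ g → ∃! p : Fin 2 × Fin (d-1), entry p.1 p.2 = LpCell.red v
  red_row : ∀ (i : Fin 2) (j j' : Fin (d-1)) (a b : ℕ),
    entry i j = LpCell.red a → entry i j' = LpCell.red b → j < j' → a < b
  red_col : ∀ (i i' : Fin 2) (j : Fin (d-1)) (a b : ℕ),
    entry i j = LpCell.red a → entry i' j = LpCell.red b → i < i' → a < b
  blue_vals : ∀ (i : Fin 2) (j : Fin (d-1)) (v : ℕ), entry i j = LpCell.blue v → v ≤ 1
  blue_row : ∀ (i : Fin 2) (j j' : Fin (d-1)) (a b : ℕ),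
    entry i j = LpCell.blue a → entry i j' = LpCell.blue b → j < j' → a ≤ b
  blue_col : ∀ (i i' : Fin 2) (j : Fin (d-1)) (a b : ℕ),
    entry i j = LpCell.blue a → entry i' j = LpCell.blue b → i < i' → a < b

/-- A negative L'-tableau with parameters (g,d,k): the same data on a 2×(d−2) grid
with k−2 gray boxes at the right of the top row. -/
def NegLpTableau (g d k : ℕ) : Type := PosLpTableau g (d-1) (k-1)

namespace Stmt16

theorem PosLpTableau.ext' {g d k : ℕ} {T U : PosLpTableau g d k}
    (h : T.entry = U.entry) : T = U := by
  cases T; cases U; cases h; rfl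

lemma fin2 (i : Fin 2) : i = 0 ∨ i = 1 := by
  rcases i with ⟨iv, hi⟩
  interval_cases iv
  · exact Or.inl rfl
  · exact Or.inr rfl

def cellRed : LpCell → Bool
  | .red _ => true
  | _ => false

lemma cellRed_iff {c : LpCell} : cellRed c = true ↔ ∃ v, c = .red v := by
  cases c <;> simp [cellRed]

def cellVal : LpCell → ℕ
  | .red v => v
  | .blue v => v
  | .gray => 0

lemma mem_iff_lt_card {N : ℕ} (s : Finset (Fin N))
    (hlow : ∀ j j' : Fin N, j' ≤ j → j ∈ s → j' ∈ s) (j : Fin N) :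
    j ∈ s ↔ (j : ℕ) < s.card := by
  constructor
  · intro hj
    have h1 : Finset.Iic j ⊆ s := fun x hx => hlow j x (Finset.mem_Iic.1 hx) hj
    have h2 := Finset.card_le_card h1
    rw [Fin.card_Iic] at h2
    omega
  · intro hj
    by_contra hns
    have h1 : s ⊆ Finset.Iio j := by
      intro x hx
      rw [Finset.mem_Iio]
      by_contra hxj
      exact hns (hlow x j (le_of_not_gt hxj) hx)
    have h2 := Finset.card_le_card h1
    rw [Fin.card_Iio] at h2
    omega

variable {n d k : ℕ}

def rcount (T : PosLpTableau n d k) (i : Fin 2) : ℕ :=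
  (Finset.univ.filter fun j => cellRed (T.entry i j) = true).card

lemma red_iff_lt (T : PosLpTableau n d k) (i : Fin 2) (j : Fin (d-1)) :
    (∃ v, T.entry i j = .red v) ↔ (j : ℕ) < rcount T i := by
  rw [← cellRed_iff]
  have h := mem_iff_lt_card (Finset.univ.filter fun j => cellRed (T.entry i j) = true)
    (fun j j' hle hj => by
      simp only [Finset.mem_filter, Finset.mem_univ, true_and, cellRed_iff] at *
      obtain ⟨v, hv⟩ := hj
      exact T.red_left i j j' v hv hle) j
  simpa [rcount] using h

lemma rcount_le (T : PosLpTableau n d k) (i : Fin 2) : rcount T i ≤ n := by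
  classical
  have h := Finset.card_le_card_of_injOn (fun j => cellVal (T.entry i j))
    (s := Finset.univ.filter fun j => cellRed (T.entry i j) = true)
    (t := Finset.Icc 1 n)
    (fun j hj => by
      simp only [Finset.mem_coe, Finset.mem_filter, Finset.mem_univ, true_and, cellRed_iff] at hj
      obtain ⟨v, hv⟩ := hj
      have := T.red_vals i j v hv
      simp [hv, cellVal, Finset.mem_Icc]
      omega)
    (by
      intro j hj j' hj' heq
      simp only [Finset.coe_filter, Set.mem_setOf_eq, Finset.mem_univ, true_and,
        cellRed_iff] at hj hj'
      obtain ⟨v, hv⟩ := hj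
      obtain ⟨v', hv'⟩ := hj'
      have hval : v = v' := by simpa [hv, hv', cellVal] using heq
      subst hval
      have hb := T.red_vals i j v hv
      obtain ⟨c, _, hu⟩ := T.red_content v hb.1 hb.2
      have h1 := hu (i, j) hv
      have h2 := hu (i, j') hv'
      have : (i, j) = ((i, j') : Fin 2 × Fin (d-1)) := h1.trans h2.symm
      exact congrArg Prod.snd this)
  rw [Nat.card_Icc] at h
  have : rcount T i = (Finset.univ.filter fun j => cellRed (T.entry i j) = true).card := rfl
  omega

lemma rcount_lt_cols (hk : 2 ≤ k) (hdk : n + k ≤ d) (T : PosLpTableau n d k) (i : Fin 2) :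
    rcount T i < d - 1 := by
  have := rcount_le T i
  omega

lemma tcount_le_bcount (hk : 2 ≤ k) (hdk : n + k ≤ d) (T : PosLpTableau n d k) :
    rcount T 1 ≤ rcount T 0 := by
  by_contra hlt
  push_neg at hlt
  have hb : rcount T 0 < d - 1 := lt_of_lt_of_le hlt (le_of_lt (rcount_lt_cols hk hdk T 1))
  set j : Fin (d-1) := ⟨rcount T 0, hb⟩ with hj
  obtain ⟨v, hv⟩ := (red_iff_lt T 1 j).2 (by simpa [hj] using hlt)
  obtain ⟨w, hw⟩ := T.red_down 1 0 j v hv (by simp [Fin.le_def])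
  have := (red_iff_lt T 0 j).1 ⟨w, hw⟩
  simp [hj] at this

lemma gray_iff' (hk : 2 ≤ k) (hdk : k ≤ d) (T : PosLpTableau n d k) (i : Fin 2)
    (j : Fin (d-1)) : T.entry i j = .gray ↔ i = 1 ∧ d - k ≤ (j : ℕ) := by
  rw [T.gray_iff]
  have h : (d-1) - (k-1) = d - k := by omega
  rw [h]

lemma bottom_blue (hk : 2 ≤ k) (hdk : k ≤ d) (T : PosLpTableau n d k)
    (hb : ∀ j, T.entry 0 j ≠ .blue 1) (j : Fin (d-1)) (hj : rcount T 0 ≤ (j : ℕ)) :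
    T.entry 0 j = .blue 0 := by
  have hnr : ¬ ∃ v, T.entry 0 j = .red v := by rw [red_iff_lt]; omega
  cases hc : T.entry 0 j with
  | red v => exact absurd ⟨v, hc⟩ hnr
  | blue v =>
    have h1 := T.blue_vals 0 j v hc
    have h2 : v ≠ 1 := fun h => hb j (h ▸ hc)
    have : v = 0 := by omega
    rw [this]
  | gray =>
    rw [gray_iff' hk hdk] at hc
    exact absurd hc.1 (by simp)

lemma top_blue1 (hk : 2 ≤ k) (hdk : n + k ≤ d) (T : PosLpTableau n d k)
    (hb : ∀ j, T.entry 0 j ≠ .blue 1) (j : Fin (d-1)) (hj1 : rcount T 0 ≤ (j : ℕ))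
    (hj2 : (j : ℕ) < d - k) : T.entry 1 j = .blue 1 := by
  have hq := tcount_le_bcount hk hdk T
  have hnr : ¬ ∃ v, T.entry 1 j = .red v := by rw [red_iff_lt]; omega
  cases hc : T.entry 1 j with
  | red v => exact absurd ⟨v, hc⟩ hnr
  | blue v =>
    have h1 := T.blue_vals 1 j v hc
    have hbot := bottom_blue hk (by omega) T hb j hj1
    have h2 := T.blue_col 0 1 j 0 v hbot hc (by simp [Fin.lt_def])
    have : v = 1 := by omega
    rw [this]
  | gray =>
    rw [gray_iff' hk (by omega)] at hc
    omega

lemma top_blue (hk : 2 ≤ k) (hdk : n + k ≤ d) (T : PosLpTableau n d k)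
    (j : Fin (d-1)) (hj1 : rcount T 1 ≤ (j : ℕ)) (hj2 : (j : ℕ) < d - k) :
    T.entry 1 j = .blue 0 ∨ T.entry 1 j = .blue 1 := by
  have hnr : ¬ ∃ v, T.entry 1 j = .red v := by rw [red_iff_lt]; omega
  cases hc : T.entry 1 j with
  | red v => exact absurd ⟨v, hc⟩ hnr
  | blue v =>
    have h1 := T.blue_vals 1 j v hc
    interval_cases v
    · exact Or.inl rfl
    · exact Or.inr rfl
  | gray =>
    rw [gray_iff' hk (by omega)] at hc
    omega

lemma last_red (T : PosLpTableau n d k) (i : Fin 2) (j : Fin (d-1))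
    (hv : T.entry i j = .red n) : (j : ℕ) + 1 = rcount T i := by
  have h1 : (j : ℕ) < rcount T i := (red_iff_lt T i j).1 ⟨n, hv⟩
  by_contra hne
  have hlt : (j : ℕ) + 1 < rcount T i := by omega
  have hb2 : (j : ℕ) + 1 < d - 1 := by
    have h3 : rcount T i ≤ (Finset.univ : Finset (Fin (d-1))).card :=
      Finset.card_filter_le _ _
    simp at h3
    omega
  obtain ⟨w, hw⟩ := (red_iff_lt T i ⟨(j : ℕ) + 1, hb2⟩).2 (by simpa using hlt)
  have h4 := T.red_row i j ⟨(j : ℕ) + 1, hb2⟩ n w hv hw (by simp [Fin.lt_def])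
  have h5 := T.red_vals i ⟨(j : ℕ) + 1, hb2⟩ w hw
  omega

lemma max_red_bottom (T : PosLpTableau n d k) (j : Fin (d-1))
    (hv : T.entry 0 j = .red n) : rcount T 1 ≤ (j : ℕ) := by
  by_contra hlt
  push_neg at hlt
  obtain ⟨w, hw⟩ := (red_iff_lt T 1 j).2 hlt
  have h1 := T.red_col 0 1 j n w hv hw (by simp [Fin.lt_def])
  have h2 := T.red_vals 1 j w hw
  omega

lemma fin2_lt {i i' : Fin 2} (h : i < i') : i = 0 ∧ i' = 1 := by
  rcases fin2 i with rfl | rfl <;> rcases fin2 i' with rfl | rfl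
  · exact absurd h (lt_irrefl _)
  · exact ⟨rfl, rfl⟩
  · exact absurd h (by decide)
  · exact absurd h (lt_irrefl _)

section AddRed

variable (hk : 2 ≤ k) (hdk : n + k ≤ d) (T : PosLpTableau n d k)
  (i₀ : Fin 2) (j₀ : Fin (d-1)) (hj₀ : (j₀ : ℕ) = rcount T i₀)
  (hdown : i₀ = 1 → (j₀ : ℕ) < rcount T 0)
  (E : Fin 2 → Fin (d-1) → LpCell)
  (hred : ∀ i j v, E i j = .red v ↔ ((i₀ = i ∧ j₀ = j ∧ v = n + 1) ∨ T.entry i j = .red v))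

include hred

include hj₀ in
lemma add_red_left : ∀ (i : Fin 2) (j j' : Fin (d-1)) (v : ℕ),
    E i j = .red v → j' ≤ j → ∃ w, E i j' = .red w := by
  intro i j j' v hv hle
  rw [hred] at hv
  rcases hv with ⟨rfl, rfl, rfl⟩ | hv
  · by_cases hj : j₀ = j'
    · exact ⟨n + 1, (hred i₀ j' (n+1)).2 (Or.inl ⟨rfl, hj, rfl⟩)⟩
    · have hlt : (j' : ℕ) < rcount T i₀ := by
        have h1 : (j' : ℕ) ≤ (j₀ : ℕ) := hle
        have hne : (j' : ℕ) ≠ (j₀ : ℕ) := fun h => hj (Fin.ext h.symm)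
        omega
      obtain ⟨w, hw⟩ := (red_iff_lt T i₀ j').2 hlt
      exact ⟨w, (hred i₀ j' w).2 (Or.inr hw)⟩
  · obtain ⟨w, hw⟩ := T.red_left i j j' v hv hle
    exact ⟨w, (hred i j' w).2 (Or.inr hw)⟩

include hj₀ hdown in
lemma add_red_down : ∀ (i i' : Fin 2) (j : Fin (d-1)) (v : ℕ),
    E i j = .red v → i' ≤ i → ∃ w, E i' j = .red w := by
  intro i i' j v hv hle
  rw [hred] at hv
  rcases hv with ⟨rfl, rfl, rfl⟩ | hv
  · by_cases hi : i₀ = i'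
    · exact ⟨n + 1, (hred i' j₀ (n+1)).2 (Or.inl ⟨hi, rfl, rfl⟩)⟩
    · rcases fin2 i₀ with h0 | h1
      · rw [h0] at hle hi
        have : i' = 0 := Fin.le_zero_iff.mp hle
        exact absurd this.symm hi
      · rcases fin2 i' with rfl | rfl
        · obtain ⟨w, hw⟩ := (red_iff_lt T 0 j₀).2 (hdown h1)
          exact ⟨w, (hred 0 j₀ w).2 (Or.inr hw)⟩
        · rw [h1] at hi
          exact absurd rfl hi
  · obtain ⟨w, hw⟩ := T.red_down i i' j v hv hle
    exact ⟨w, (hred i' j w).2 (Or.inr hw)⟩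

lemma add_red_vals : ∀ (i : Fin 2) (j : Fin (d-1)) (v : ℕ),
    E i j = .red v → 1 ≤ v ∧ v ≤ n + 1 := by
  intro i j v hv
  rw [hred] at hv
  rcases hv with ⟨_, _, rfl⟩ | hv
  · omega
  · have := T.red_vals i j v hv
    omega

lemma add_red_content : ∀ v : ℕ, 1 ≤ v → v ≤ n + 1 →
    ∃! p : Fin 2 × Fin (d-1), E p.1 p.2 = LpCell.red v := by
  intro v h1 h2
  by_cases hv : v = n + 1
  · subst hv
    refine ⟨(i₀, j₀), (hred i₀ j₀ (n+1)).2 (Or.inl ⟨rfl, rfl, rfl⟩), ?_⟩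
    rintro ⟨i, j⟩ hc
    rw [hred] at hc
    rcases hc with ⟨rfl, rfl, _⟩ | hc
    · rfl
    · have := T.red_vals i j (n+1) hc
      omega
  · obtain ⟨c, hc, hu⟩ := T.red_content v h1 (by omega)
    refine ⟨c, (hred c.1 c.2 v).2 (Or.inr hc), ?_⟩
    rintro ⟨i, j⟩ hc'
    rw [hred] at hc'
    rcases hc' with ⟨_, _, rfl⟩ | hc'
    · omega
    · exact hu (i, j) hc'

include hj₀ in
lemma add_red_row : ∀ (i : Fin 2) (j j' : Fin (d-1)) (a b : ℕ),
    E i j = .red a → E i j' = .red b → j < j' → a < b := by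
  intro i j j' a b ha hb hlt
  rw [hred] at ha hb
  rcases ha with ⟨rfl, rfl, rfl⟩ | ha <;> rcases hb with ⟨-, rfl, rfl⟩ | hb
  · exact absurd hlt (lt_irrefl _)
  · have h1 := (red_iff_lt T i₀ j').1 ⟨b, hb⟩
    have hl : (j₀ : ℕ) < (j' : ℕ) := hlt
    omega
  · have := T.red_vals i j a ha
    omega
  · exact T.red_row i j j' a b ha hb hlt

include hk hdk hj₀ in
lemma add_red_col : ∀ (i i' : Fin 2) (j : Fin (d-1)) (a b : ℕ),
    E i j = .red a → E i' j = .red b → i < i' → a < b := by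
  intro i i' j a b ha hb hlt
  obtain ⟨rfl, rfl⟩ := fin2_lt hlt
  rw [hred] at ha hb
  rcases ha with ⟨hi0, rfl, rfl⟩ | ha <;> rcases hb with ⟨hi1, hj1, rfl⟩ | hb
  · exact absurd (hi0.symm.trans hi1) (by decide)
  · have h1 := (red_iff_lt T 1 j₀).1 ⟨b, hb⟩
    have h2 := tcount_le_bcount hk hdk T
    rw [hi0] at hj₀
    omega
  · rw [← hj1] at ha
    have := T.red_vals 0 j₀ a ha
    omega
  · exact T.red_col 0 1 j a b ha hb hlt

end AddRed

section RmRed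

variable (T : PosLpTableau (n+1) d k)
  (i₀ : Fin 2) (j₀ : Fin (d-1)) (hc₀ : T.entry i₀ j₀ = .red (n+1))
  (huniq : ∀ (i : Fin 2) (j : Fin (d-1)), T.entry i j = .red (n+1) → i₀ = i ∧ j₀ = j)
  (E : Fin 2 → Fin (d-1) → LpCell)
  (hred : ∀ i j v, E i j = .red v ↔ (T.entry i j = .red v ∧ ¬(i₀ = i ∧ j₀ = j)))

include hred

include huniq in
lemma rm_val_le : ∀ (i : Fin 2) (j : Fin (d-1)) (v : ℕ), E i j = .red v → v ≤ n := by
  intro i j v hv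
  rw [hred] at hv
  have h1 := T.red_vals i j v hv.1
  have h2 : v ≠ n + 1 := fun h => hv.2 (huniq i j (h ▸ hv.1))
  omega

include hc₀ in
lemma rm_red_left : ∀ (i : Fin 2) (j j' : Fin (d-1)) (v : ℕ),
    E i j = .red v → j' ≤ j → ∃ w, E i j' = .red w := by
  intro i j j' v hv hle
  rw [hred] at hv
  obtain ⟨hv, hne⟩ := hv
  obtain ⟨w, hw⟩ := T.red_left i j j' v hv hle
  refine ⟨w, (hred i j' w).2 ⟨hw, ?_⟩⟩
  rintro ⟨rfl, rfl⟩
  have hjne : j₀ ≠ j := fun h => hne ⟨rfl, h⟩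
  have hlt : j₀ < j := lt_of_le_of_ne hle hjne
  have h1 := T.red_row i₀ j₀ j (n+1) v hc₀ hv hlt
  have h2 := T.red_vals i₀ j v hv
  omega

include hc₀ in
lemma rm_red_down : ∀ (i i' : Fin 2) (j : Fin (d-1)) (v : ℕ),
    E i j = .red v → i' ≤ i → ∃ w, E i' j = .red w := by
  intro i i' j v hv hle
  rw [hred] at hv
  obtain ⟨hv, hne⟩ := hv
  obtain ⟨w, hw⟩ := T.red_down i i' j v hv hle
  refine ⟨w, (hred i' j w).2 ⟨hw, ?_⟩⟩
  rintro ⟨rfl, rfl⟩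
  have hine : i₀ ≠ i := fun h => hne ⟨h, rfl⟩
  have hlt : i₀ < i := lt_of_le_of_ne hle hine
  have h1 := T.red_col i₀ i j₀ (n+1) v hc₀ hv hlt
  have h2 := T.red_vals i j₀ v hv
  omega

include huniq in
lemma rm_red_vals : ∀ (i : Fin 2) (j : Fin (d-1)) (v : ℕ),
    E i j = .red v → 1 ≤ v ∧ v ≤ n := by
  intro i j v hv
  refine ⟨?_, rm_val_le T i₀ j₀ huniq E hred i j v hv⟩
  rw [hred] at hv
  exact (T.red_vals i j v hv.1).1

include hc₀ in
lemma rm_red_content : ∀ v : ℕ, 1 ≤ v → v ≤ n →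
    ∃! p : Fin 2 × Fin (d-1), E p.1 p.2 = LpCell.red v := by
  intro v h1 h2
  obtain ⟨c, hc, hu⟩ := T.red_content v h1 (by omega)
  have hcne : ¬(i₀ = c.1 ∧ j₀ = c.2) := by
    rintro ⟨h3, h4⟩
    rw [← h3, ← h4] at hc
    rw [hc₀] at hc
    injection hc with h5
    omega
  refine ⟨c, (hred c.1 c.2 v).2 ⟨hc, hcne⟩, ?_⟩
  rintro ⟨i, j⟩ hc'
  rw [hred] at hc'
  exact hu (i, j) hc'.1

lemma rm_red_row : ∀ (i : Fin 2) (j j' : Fin (d-1)) (a b : ℕ),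
    E i j = .red a → E i j' = .red b → j < j' → a < b := by
  intro i j j' a b ha hb hlt
  rw [hred] at ha hb
  exact T.red_row i j j' a b ha.1 hb.1 hlt

lemma rm_red_col : ∀ (i i' : Fin 2) (j : Fin (d-1)) (a b : ℕ),
    E i j = .red a → E i' j = .red b → i < i' → a < b := by
  intro i i' j a b ha hb hlt
  rw [hred] at ha hb
  exact T.red_col i i' j a b ha.1 hb.1 hlt

end RmRed

section Forward

variable (hk : 2 ≤ k) (hdk : n + 1 + k ≤ d)
variable (T : PosLpTableau n d k)

def colOf (i : Fin 2) : Fin (d-1) :=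
  ⟨rcount T i, by have := rcount_le T i; omega⟩

/-- add red (n+1) at the end of the bottom row -/
def opBottomE : Fin 2 → Fin (d-1) → LpCell :=
  fun i j => if i = 0 ∧ j = colOf hk hdk T 0 then .red (n+1) else T.entry i j

/-- add red (n+1) at the end of the top row -/
def opTopE : Fin 2 → Fin (d-1) → LpCell :=
  fun i j => if i = 1 ∧ j = colOf hk hdk T 1 then .red (n+1) else T.entry i j

/-- add red (n+1) at the end of the bottom row, flipping top blue 1s (≤ that column) to 0 -/
def opFlipE : Fin 2 → Fin (d-1) → LpCell :=
  fun i j => if i = 0 ∧ j = colOf hk hdk T 0 then .red (n+1)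
    else if i = 1 ∧ (j : ℕ) ≤ rcount T 0 ∧ T.entry i j = .blue 1 then .blue 0
    else T.entry i j

lemma opBottomE_red (i : Fin 2) (j : Fin (d-1)) (v : ℕ) :
    opBottomE hk hdk T i j = .red v ↔
      ((0 = i ∧ colOf hk hdk T 0 = j ∧ v = n + 1) ∨ T.entry i j = .red v) := by
  unfold opBottomE
  by_cases h : i = 0 ∧ j = colOf hk hdk T 0
  · rw [if_pos h]
    constructor
    · intro he; injection he with hv; exact Or.inl ⟨h.1.symm, h.2.symm, hv.symm⟩
    · rintro (⟨_, _, rfl⟩ | hold)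
      · rfl
      · exfalso
        rw [h.1, h.2] at hold
        have h2 := (red_iff_lt T 0 (colOf hk hdk T 0)).1 ⟨v, hold⟩
        simp [colOf] at h2
  · rw [if_neg h]
    constructor
    · exact Or.inr
    · rintro (⟨hi, hj, rfl⟩ | hold)
      · exact absurd ⟨hi.symm, hj.symm⟩ h
      · exact hold

lemma opTopE_red (i : Fin 2) (j : Fin (d-1)) (v : ℕ) :
    opTopE hk hdk T i j = .red v ↔
      ((1 = i ∧ colOf hk hdk T 1 = j ∧ v = n + 1) ∨ T.entry i j = .red v) := by
  unfold opTopE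
  by_cases h : i = 1 ∧ j = colOf hk hdk T 1
  · rw [if_pos h]
    constructor
    · intro he; injection he with hv; exact Or.inl ⟨h.1.symm, h.2.symm, hv.symm⟩
    · rintro (⟨_, _, rfl⟩ | hold)
      · rfl
      · exfalso
        rw [h.1, h.2] at hold
        have h2 := (red_iff_lt T 1 (colOf hk hdk T 1)).1 ⟨v, hold⟩
        simp [colOf] at h2
  · rw [if_neg h]
    constructor
    · exact Or.inr
    · rintro (⟨hi, hj, rfl⟩ | hold)
      · exact absurd ⟨hi.symm, hj.symm⟩ h
      · exact hold

lemma opFlipE_red (i : Fin 2) (j : Fin (d-1)) (v : ℕ) :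
    opFlipE hk hdk T i j = .red v ↔
      ((0 = i ∧ colOf hk hdk T 0 = j ∧ v = n + 1) ∨ T.entry i j = .red v) := by
  unfold opFlipE
  by_cases h : i = 0 ∧ j = colOf hk hdk T 0
  · rw [if_pos h]
    constructor
    · intro he; injection he with hv; exact Or.inl ⟨h.1.symm, h.2.symm, hv.symm⟩
    · rintro (⟨_, _, rfl⟩ | hold)
      · rfl
      · exfalso
        rw [h.1, h.2] at hold
        have h2 := (red_iff_lt T 0 (colOf hk hdk T 0)).1 ⟨v, hold⟩
        simp [colOf] at h2
  · rw [if_neg h]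
    by_cases h2 : i = 1 ∧ (j : ℕ) ≤ rcount T 0 ∧ T.entry i j = .blue 1
    · rw [if_pos h2]
      constructor
      · intro he; simp at he
      · rintro (⟨hi, hj, rfl⟩ | hold)
        · exact absurd ⟨hi.symm, hj.symm⟩ h
        · rw [h2.2.2] at hold; simp at hold
    · rw [if_neg h2]
      constructor
      · exact Or.inr
      · rintro (⟨hi, hj, rfl⟩ | hold)
        · exact absurd ⟨hi.symm, hj.symm⟩ h
        · exact hold

lemma opBottomE_blue {i : Fin 2} {j : Fin (d-1)} {v : ℕ}
    (h : opBottomE hk hdk T i j = .blue v) : T.entry i j = .blue v := by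
  unfold opBottomE at h
  split_ifs at h with h1
  exact h

lemma opTopE_blue {i : Fin 2} {j : Fin (d-1)} {v : ℕ}
    (h : opTopE hk hdk T i j = .blue v) : T.entry i j = .blue v := by
  unfold opTopE at h
  split_ifs at h with h1
  exact h

lemma opFlipE_blue {i : Fin 2} {j : Fin (d-1)} {v : ℕ}
    (h : opFlipE hk hdk T i j = .blue v) :
    (v = 0 ∧ i = 1 ∧ (j : ℕ) ≤ rcount T 0 ∧ T.entry i j = .blue 1) ∨
      (T.entry i j = .blue v ∧ ¬(i = 0 ∧ j = colOf hk hdk T 0) ∧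
        ¬(i = 1 ∧ (j : ℕ) ≤ rcount T 0 ∧ T.entry i j = .blue 1)) := by
  unfold opFlipE at h
  split_ifs at h with h1 h2
  · injection h with hv
    exact Or.inl ⟨hv.symm, h2⟩
  · exact Or.inr ⟨h, h1, h2⟩

lemma opBottomE_gray (i : Fin 2) (j : Fin (d-1)) :
    opBottomE hk hdk T i j = .gray ↔ T.entry i j = .gray := by
  unfold opBottomE
  split_ifs with h1
  · constructor
    · intro h; simp at h
    · intro h
      rw [gray_iff' hk (by omega) T] at h
      rw [h1.1] at h
      exact absurd h.1 (by decide)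
  · exact Iff.rfl

lemma opTopE_gray (i : Fin 2) (j : Fin (d-1)) :
    opTopE hk hdk T i j = .gray ↔ T.entry i j = .gray := by
  unfold opTopE
  split_ifs with h1
  · constructor
    · intro h; simp at h
    · intro h
      rw [gray_iff' hk (by omega) T] at h
      have h2 : (j : ℕ) = rcount T 1 := by rw [h1.2]; rfl
      have h3 := rcount_le T 1
      omega
  · exact Iff.rfl

lemma opFlipE_gray (i : Fin 2) (j : Fin (d-1)) :
    opFlipE hk hdk T i j = .gray ↔ T.entry i j = .gray := by
  unfold opFlipE
  split_ifs with h1 h2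
  · constructor
    · intro h; simp at h
    · intro h
      rw [gray_iff' hk (by omega) T] at h
      rw [h1.1] at h
      exact absurd h.1 (by decide)
  · constructor
    · intro h; simp at h
    · intro h
      rw [h2.2.2] at h
      simp at h
  · exact Iff.rfl

def opBottom (hb : ∀ j, T.entry 0 j ≠ .blue 1) : PosLpTableau (n+1) d k where
  entry := opBottomE hk hdk T
  gray_iff := by
    intro i j
    rw [opBottomE_gray hk hdk T i j]
    exact T.gray_iff i j
  red_left := add_red_left T 0 (colOf hk hdk T 0) rfl _ (opBottomE_red hk hdk T)
  red_down := add_red_down T 0 (colOf hk hdk T 0) rfl (fun h => absurd h (by decide)) _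
    (opBottomE_red hk hdk T)
  red_vals := add_red_vals T 0 (colOf hk hdk T 0) _ (opBottomE_red hk hdk T)
  red_content := add_red_content T 0 (colOf hk hdk T 0) _ (opBottomE_red hk hdk T)
  red_row := add_red_row T 0 (colOf hk hdk T 0) rfl _ (opBottomE_red hk hdk T)
  red_col := add_red_col hk (by omega) T 0 (colOf hk hdk T 0) rfl _ (opBottomE_red hk hdk T)
  blue_vals := fun i j v hv => T.blue_vals i j v (opBottomE_blue hk hdk T hv)
  blue_row := fun i j j' a b ha hb' hlt =>
    T.blue_row i j j' a b (opBottomE_blue hk hdk T ha) (opBottomE_blue hk hdk T hb') hlt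
  blue_col := fun i i' j a b ha hb' hlt =>
    T.blue_col i i' j a b (opBottomE_blue hk hdk T ha) (opBottomE_blue hk hdk T hb') hlt

lemma opBottom_hb (hb : ∀ j, T.entry 0 j ≠ .blue 1) (j : Fin (d-1)) :
    (opBottom hk hdk T hb).entry 0 j ≠ .blue 1 :=
  fun h => hb j (opBottomE_blue hk hdk T h)

def opTop (hb : ∀ j, T.entry 0 j ≠ .blue 1)
    (hside : T.entry 1 (colOf hk hdk T 1) = .blue 0) : PosLpTableau (n+1) d k where
  entry := opTopE hk hdk T
  gray_iff := by
    intro i j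
    rw [opTopE_gray hk hdk T i j]
    exact T.gray_iff i j
  red_left := add_red_left T 1 (colOf hk hdk T 1) rfl _ (opTopE_red hk hdk T)
  red_down := by
    refine add_red_down T 1 (colOf hk hdk T 1) rfl ?_ _ (opTopE_red hk hdk T)
    intro _
    -- need : rcount T 1 < rcount T 0
    have hle := tcount_le_bcount hk (by omega) T
    rcases lt_or_eq_of_le hle with h | h
    · exact h
    · exfalso
      have := top_blue1 hk (by omega) T hb (colOf hk hdk T 1)
        (by simp [colOf]; omega) (by simp [colOf]; have := rcount_le T 1; omega)
      rw [hside] at this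
      simp at this
  red_vals := add_red_vals T 1 (colOf hk hdk T 1) _ (opTopE_red hk hdk T)
  red_content := add_red_content T 1 (colOf hk hdk T 1) _ (opTopE_red hk hdk T)
  red_row := add_red_row T 1 (colOf hk hdk T 1) rfl _ (opTopE_red hk hdk T)
  red_col := add_red_col hk (by omega) T 1 (colOf hk hdk T 1) rfl _ (opTopE_red hk hdk T)
  blue_vals := fun i j v hv => T.blue_vals i j v (opTopE_blue hk hdk T hv)
  blue_row := fun i j j' a b ha hb' hlt =>
    T.blue_row i j j' a b (opTopE_blue hk hdk T ha) (opTopE_blue hk hdk T hb') hlt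
  blue_col := fun i i' j a b ha hb' hlt =>
    T.blue_col i i' j a b (opTopE_blue hk hdk T ha) (opTopE_blue hk hdk T hb') hlt

lemma opTop_hb (hb : ∀ j, T.entry 0 j ≠ .blue 1)
    (hside : T.entry 1 (colOf hk hdk T 1) = .blue 0) (j : Fin (d-1)) :
    (opTop hk hdk T hb hside).entry 0 j ≠ .blue 1 :=
  fun h => hb j (opTopE_blue hk hdk T h)

def opFlip (hb : ∀ j, T.entry 0 j ≠ .blue 1) : PosLpTableau (n+1) d k where
  entry := opFlipE hk hdk T
  gray_iff := by
    intro i j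
    rw [opFlipE_gray hk hdk T i j]
    exact T.gray_iff i j
  red_left := add_red_left T 0 (colOf hk hdk T 0) rfl _ (opFlipE_red hk hdk T)
  red_down := add_red_down T 0 (colOf hk hdk T 0) rfl (fun h => absurd h (by decide)) _
    (opFlipE_red hk hdk T)
  red_vals := add_red_vals T 0 (colOf hk hdk T 0) _ (opFlipE_red hk hdk T)
  red_content := add_red_content T 0 (colOf hk hdk T 0) _ (opFlipE_red hk hdk T)
  red_row := add_red_row T 0 (colOf hk hdk T 0) rfl _ (opFlipE_red hk hdk T)
  red_col := add_red_col hk (by omega) T 0 (colOf hk hdk T 0) rfl _ (opFlipE_red hk hdk T)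
  blue_vals := by
    intro i j v hv
    rcases opFlipE_blue hk hdk T hv with ⟨rfl, _⟩ | ⟨hold, _⟩
    · omega
    · exact T.blue_vals i j v hold
  blue_row := by
    intro i j j' a b ha hb' hlt
    rcases opFlipE_blue hk hdk T ha with ⟨rfl, _⟩ | ⟨hold, hne1, hne2⟩
    · exact Nat.zero_le b
    rcases opFlipE_blue hk hdk T hb' with ⟨rfl, hi1, hjle, hb1⟩ | ⟨hold', _, _⟩
    · -- left cell not flipped though flippable position: so its old value must be 0
      have hi : i = 1 := hi1
      have hjle' : (j : ℕ) ≤ rcount T 0 := by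
        have : (j : ℕ) < (j' : ℕ) := hlt
        omega
      have ha1 : T.entry i j ≠ .blue 1 := by
        intro hc
        exact hne2 ⟨hi, hjle', hc⟩
      have := T.blue_vals i j a hold
      have : a ≠ 1 := fun h => ha1 (h ▸ hold)
      omega
    · exact T.blue_row i j j' a b hold hold' hlt
  blue_col := by
    intro i i' j a b ha hb' hlt
    obtain ⟨rfl, rfl⟩ := fin2_lt hlt
    rcases opFlipE_blue hk hdk T ha with ⟨rfl, hi1, _⟩ | ⟨hold, hne1, hne2⟩
    · exact absurd hi1 (by decide)
    rcases opFlipE_blue hk hdk T hb' with ⟨rfl, hi1, hjle, hb1⟩ | ⟨hold', _, _⟩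
    · -- bottom old blue at column j with j ≤ rcount T 0 and j ≠ rcount T 0 : contradiction
      exfalso
      have hnr : ¬((j : ℕ) < rcount T 0) := by
        rw [← red_iff_lt]
        rintro ⟨w, hw⟩
        rw [hw] at hold
        simp at hold
      have hne : (j : ℕ) ≠ rcount T 0 := by
        intro h
        exact hne1 ⟨rfl, by ext; simpa [colOf] using h⟩
      omega
    · exact T.blue_col 0 1 j a b hold hold' hlt

lemma opFlip_hb (hb : ∀ j, T.entry 0 j ≠ .blue 1) (j : Fin (d-1)) :
    (opFlip hk hdk T hb).entry 0 j ≠ .blue 1 := by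
  intro h
  rcases opFlipE_blue hk hdk T (h : opFlipE hk hdk T 0 j = .blue 1) with ⟨h0, _⟩ | ⟨hold, _⟩
  · exact absurd h0 (by decide)
  · exact hb j hold

end Forward

section Backward

variable (T : PosLpTableau (n+1) d k)

lemma rcount_le_cols (U : PosLpTableau n d k) (i : Fin 2) : rcount U i ≤ d - 1 := by
  have h := Finset.card_filter_le (Finset.univ : Finset (Fin (d-1)))
    (fun j => cellRed (U.entry i j) = true)
  simpa [rcount] using h

lemma rcount_eq {m : ℕ} (U : PosLpTableau m d k) (i : Fin 2) (t : ℕ) (ht : t ≤ d - 1)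
    (h : ∀ j : Fin (d-1), ((j : ℕ) < rcount U i ↔ (j : ℕ) < t)) : rcount U i = t := by
  have h1 : rcount U i ≤ d - 1 := by
    have h2 := Finset.card_filter_le (Finset.univ : Finset (Fin (d-1)))
      (fun j => cellRed (U.entry i j) = true)
    simpa [rcount] using h2
  rcases Nat.lt_or_ge (rcount U i) t with hlt | hge
  · have hb2 : rcount U i < d - 1 := lt_of_lt_of_le hlt ht
    have := (h ⟨rcount U i, hb2⟩).2 (by simpa using hlt)
    simp at this
  · by_contra hne
    have hlt : t < rcount U i := by omega
    have hb2 : t < d - 1 := lt_of_lt_of_le hlt h1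
    have := (h ⟨t, hb2⟩).1 (by simpa using hlt)
    simp at this

noncomputable def maxPos : Fin 2 × Fin (d-1) :=
  (T.red_content (n+1) (by omega) le_rfl).exists.choose

lemma maxPos_spec : T.entry (maxPos T).1 (maxPos T).2 = .red (n+1) :=
  (T.red_content (n+1) (by omega) le_rfl).exists.choose_spec

lemma maxPos_uniq : ∀ (i : Fin 2) (j : Fin (d-1)),
    T.entry i j = .red (n+1) → (maxPos T).1 = i ∧ (maxPos T).2 = j := by
  intro i j h
  obtain ⟨c, hc, hu⟩ := T.red_content (n+1) (by omega) le_rfl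
  have h1 := hu (i, j) h
  have h2 := hu (maxPos T) (maxPos_spec T)
  have h3 : maxPos T = (i, j) := h2.trans h1.symm
  exact ⟨by rw [h3], by rw [h3]⟩

noncomputable def opRmE : Fin 2 → Fin (d-1) → LpCell :=
  fun i j => if i = (maxPos T).1 ∧ j = (maxPos T).2 then .blue 0 else T.entry i j

noncomputable def opRmFlipE : Fin 2 → Fin (d-1) → LpCell :=
  fun i j => if i = (maxPos T).1 ∧ j = (maxPos T).2 then .blue 0
    else if i = 1 ∧ T.entry i j = .blue 0 then .blue 1
    else T.entry i j

lemma opRmE_red (i : Fin 2) (j : Fin (d-1)) (v : ℕ) :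
    opRmE T i j = .red v ↔
      (T.entry i j = .red v ∧ ¬((maxPos T).1 = i ∧ (maxPos T).2 = j)) := by
  unfold opRmE
  by_cases h : i = (maxPos T).1 ∧ j = (maxPos T).2
  · rw [if_pos h]
    constructor
    · intro he; simp at he
    · rintro ⟨hold, hne⟩
      exact absurd ⟨h.1.symm, h.2.symm⟩ hne
  · rw [if_neg h]
    exact ⟨fun he => ⟨he, fun hc => h ⟨hc.1.symm, hc.2.symm⟩⟩, fun hc => hc.1⟩

lemma opRmFlipE_red (i : Fin 2) (j : Fin (d-1)) (v : ℕ) :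
    opRmFlipE T i j = .red v ↔
      (T.entry i j = .red v ∧ ¬((maxPos T).1 = i ∧ (maxPos T).2 = j)) := by
  unfold opRmFlipE
  by_cases h : i = (maxPos T).1 ∧ j = (maxPos T).2
  · rw [if_pos h]
    constructor
    · intro he; simp at he
    · rintro ⟨hold, hne⟩
      exact absurd ⟨h.1.symm, h.2.symm⟩ hne
  · rw [if_neg h]
    by_cases h2 : i = 1 ∧ T.entry i j = .blue 0
    · rw [if_pos h2]
      constructor
      · intro he; simp at he
      · rintro ⟨hold, _⟩
        rw [h2.2] at hold
        simp at hold
    · rw [if_neg h2]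
      exact ⟨fun he => ⟨he, fun hc => h ⟨hc.1.symm, hc.2.symm⟩⟩, fun hc => hc.1⟩

lemma opRmE_blue {i : Fin 2} {j : Fin (d-1)} {v : ℕ} (h : opRmE T i j = .blue v) :
    (v = 0 ∧ i = (maxPos T).1 ∧ j = (maxPos T).2) ∨ T.entry i j = .blue v := by
  unfold opRmE at h
  split_ifs at h with h1
  · injection h with hv
    exact Or.inl ⟨hv.symm, h1⟩
  · exact Or.inr h

lemma opRmFlipE_blue {i : Fin 2} {j : Fin (d-1)} {v : ℕ} (h : opRmFlipE T i j = .blue v) :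
    (v = 0 ∧ i = (maxPos T).1 ∧ j = (maxPos T).2) ∨
      (v = 1 ∧ i = 1 ∧ T.entry i j = .blue 0) ∨
      (T.entry i j = .blue v ∧ ¬(i = 1 ∧ T.entry i j = .blue 0) ∧
        ¬(i = (maxPos T).1 ∧ j = (maxPos T).2)) := by
  unfold opRmFlipE at h
  split_ifs at h with h1 h2
  · injection h with hv
    exact Or.inl ⟨hv.symm, h1⟩
  · injection h with hv
    exact Or.inr (Or.inl ⟨hv.symm, h2⟩)
  · exact Or.inr (Or.inr ⟨h, h2, h1⟩)

lemma opRmE_gray (i : Fin 2) (j : Fin (d-1)) :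
    opRmE T i j = .gray ↔ T.entry i j = .gray := by
  unfold opRmE
  split_ifs with h1
  · constructor
    · intro h; simp at h
    · intro h
      rw [h1.1, h1.2, maxPos_spec T] at h
      simp at h
  · exact Iff.rfl

lemma opRmFlipE_gray (i : Fin 2) (j : Fin (d-1)) :
    opRmFlipE T i j = .gray ↔ T.entry i j = .gray := by
  unfold opRmFlipE
  split_ifs with h1 h2
  · constructor
    · intro h; simp at h
    · intro h
      rw [h1.1, h1.2, maxPos_spec T] at h
      simp at h
  · constructor
    · intro h; simp at h
    · intro h
      rw [h2.2] at h
      simp at h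
  · exact Iff.rfl

noncomputable def opRm (hb : ∀ j, T.entry 0 j ≠ .blue 1)
    (hcol : (maxPos T).1 = 0 → T.entry 1 (maxPos T).2 = .blue 1) :
    PosLpTableau n d k where
  entry := opRmE T
  gray_iff := by
    intro i j
    rw [opRmE_gray T]
    exact T.gray_iff i j
  red_left := rm_red_left T (maxPos T).1 (maxPos T).2 (maxPos_spec T) _ (opRmE_red T)
  red_down := rm_red_down T (maxPos T).1 (maxPos T).2 (maxPos_spec T) _ (opRmE_red T)
  red_vals := rm_red_vals T (maxPos T).1 (maxPos T).2 (maxPos_uniq T) _ (opRmE_red T)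
  red_content := rm_red_content T (maxPos T).1 (maxPos T).2 (maxPos_spec T) _ (opRmE_red T)
  red_row := rm_red_row T (maxPos T).1 (maxPos T).2 _ (opRmE_red T)
  red_col := rm_red_col T (maxPos T).1 (maxPos T).2 _ (opRmE_red T)
  blue_vals := by
    intro i j v hv
    rcases opRmE_blue T hv with ⟨rfl, _⟩ | hold
    · omega
    · exact T.blue_vals i j v hold
  blue_row := by
    intro i j j' a b ha hb' hlt
    rcases opRmE_blue T ha with ⟨rfl, _⟩ | hold
    · exact Nat.zero_le b
    rcases opRmE_blue T hb' with ⟨rfl, hi, hj⟩ | hold'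
    · exfalso
      rw [hi] at hold
      obtain ⟨w, hw⟩ := T.red_left (maxPos T).1 (maxPos T).2 j (n+1) (maxPos_spec T)
        (by rw [← hj]; exact le_of_lt hlt)
      rw [hw] at hold
      simp at hold
    · exact T.blue_row i j j' a b hold hold' hlt
  blue_col := by
    intro i i' j a b ha hb' hlt
    obtain ⟨rfl, rfl⟩ := fin2_lt hlt
    rcases opRmE_blue T ha with ⟨rfl, hi, hj⟩ | hold
    · rcases opRmE_blue T hb' with ⟨rfl, hi', _⟩ | hold'
      · rw [← hi] at hi'
        exact absurd hi' (by decide)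
      · have h1 := hcol hi.symm
        rw [hj, h1] at hold'
        injection hold' with hv
        omega
    · rcases opRmE_blue T hb' with ⟨rfl, hi', hj'⟩ | hold'
      · exfalso
        obtain ⟨w, hw⟩ := T.red_down (maxPos T).1 0 (maxPos T).2 (n+1) (maxPos_spec T)
          (by rw [← hi']; decide)
        rw [hj', hw] at hold
        simp at hold
      · exact T.blue_col 0 1 j a b hold hold' hlt

lemma opRm_hb (hb : ∀ j, T.entry 0 j ≠ .blue 1)
    (hcol : (maxPos T).1 = 0 → T.entry 1 (maxPos T).2 = .blue 1) (j : Fin (d-1)) :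
    (opRm T hb hcol).entry 0 j ≠ .blue 1 := by
  intro h
  rcases opRmE_blue T (h : opRmE T 0 j = .blue 1) with ⟨h0, _⟩ | hold
  · exact absurd h0 (by decide)
  · exact hb j hold

noncomputable def opRmFlip (hb : ∀ j, T.entry 0 j ≠ .blue 1)
    (hi₀ : (maxPos T).1 = 0) : PosLpTableau n d k where
  entry := opRmFlipE T
  gray_iff := by
    intro i j
    rw [opRmFlipE_gray T]
    exact T.gray_iff i j
  red_left := rm_red_left T (maxPos T).1 (maxPos T).2 (maxPos_spec T) _ (opRmFlipE_red T)
  red_down := rm_red_down T (maxPos T).1 (maxPos T).2 (maxPos_spec T) _ (opRmFlipE_red T)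
  red_vals := rm_red_vals T (maxPos T).1 (maxPos T).2 (maxPos_uniq T) _ (opRmFlipE_red T)
  red_content := rm_red_content T (maxPos T).1 (maxPos T).2 (maxPos_spec T) _ (opRmFlipE_red T)
  red_row := rm_red_row T (maxPos T).1 (maxPos T).2 _ (opRmFlipE_red T)
  red_col := rm_red_col T (maxPos T).1 (maxPos T).2 _ (opRmFlipE_red T)
  blue_vals := by
    intro i j v hv
    rcases opRmFlipE_blue T hv with ⟨rfl, _⟩ | ⟨rfl, _⟩ | ⟨hold, _⟩
    · omega
    · omega
    · exact T.blue_vals i j v hold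
  blue_row := by
    intro i j j' a b ha hb' hlt
    rcases fin2 i with rfl | rfl
    · -- bottom row: a must be 0
      rcases opRmFlipE_blue T ha with ⟨rfl, _⟩ | ⟨_, hi, _⟩ | ⟨hold, _, _⟩
      · exact Nat.zero_le b
      · exact absurd hi (by decide)
      · have h1 := T.blue_vals 0 j a hold
        have h2 : a ≠ 1 := fun h => hb j (h ▸ hold)
        omega
    · -- top row: b must be 1
      have hb1 : b = 1 := by
        rcases opRmFlipE_blue T hb' with ⟨rfl, hi, _⟩ | ⟨rfl, _⟩ | ⟨hold, hnf, _⟩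
        · rw [← hi] at hi₀
          exact absurd hi₀ (by decide)
        · rfl
        · have h1 := T.blue_vals 1 j' b hold
          have h2 : b ≠ 0 := fun h => hnf ⟨rfl, h ▸ hold⟩
          omega
      have ha1 : a ≤ 1 := by
        rcases opRmFlipE_blue T ha with ⟨rfl, _⟩ | ⟨rfl, _⟩ | ⟨hold, _, _⟩
        · omega
        · omega
        · exact T.blue_vals 1 j a hold
      omega
  blue_col := by
    intro i i' j a b ha hb' hlt
    obtain ⟨rfl, rfl⟩ := fin2_lt hlt
    have ha0 : a = 0 := by
      rcases opRmFlipE_blue T ha with ⟨rfl, _⟩ | ⟨_, hi, _⟩ | ⟨hold, _, _⟩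
      · rfl
      · exact absurd hi (by decide)
      · have h1 := T.blue_vals 0 j a hold
        have h2 : a ≠ 1 := fun h => hb j (h ▸ hold)
        omega
    have hb1 : b = 1 := by
      rcases opRmFlipE_blue T hb' with ⟨rfl, hi, _⟩ | ⟨rfl, _⟩ | ⟨hold, hnf, _⟩
      · rw [← hi] at hi₀
        exact absurd hi₀ (by decide)
      · rfl
      · have h1 := T.blue_vals 1 j b hold
        have h2 : b ≠ 0 := fun h => hnf ⟨rfl, h ▸ hold⟩
        omega
    omega

lemma opRmFlip_hb (hb : ∀ j, T.entry 0 j ≠ .blue 1)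
    (hi₀ : (maxPos T).1 = 0) (j : Fin (d-1)) :
    (opRmFlip T hb hi₀).entry 0 j ≠ .blue 1 := by
  intro h
  rcases opRmFlipE_blue T (h : opRmFlipE T 0 j = .blue 1) with ⟨h0, _⟩ | ⟨_, hi, _⟩ | ⟨hold, _⟩
  · exact absurd h0 (by decide)
  · exact absurd hi (by decide)
  · exact hb j hold

end Backward

abbrev Xt (n d k : ℕ) :=
  {T : PosLpTableau n d k // ∀ j : Fin (d-1), T.entry 0 j ≠ LpCell.blue 1}

section Step

variable (hk : 2 ≤ k) (hdk : n + 1 + k ≤ d)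

/-- no blue 0 in the whole top row, given none at position `rcount T 1` -/
lemma no_top_blue0 (T : PosLpTableau n d k) (hs : T.entry 1 (colOf hk hdk T 1) ≠ .blue 0)
    (j : Fin (d-1)) : T.entry 1 j ≠ .blue 0 := by
  intro hc
  have hq : rcount T 1 ≤ (j : ℕ) := by
    by_contra h
    push_neg at h
    obtain ⟨w, hw⟩ := (red_iff_lt T 1 j).2 h
    rw [hw] at hc
    simp at hc
  have hcolq : ((colOf hk hdk T 1 : Fin (d-1)) : ℕ) = rcount T 1 := rfl
  rcases top_blue hk (by omega) T (colOf hk hdk T 1) (le_of_eq hcolq.symm)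
      (by rw [hcolq]; have := rcount_le T 1; omega) with h0 | h1
  · exact hs h0
  · rcases Nat.eq_or_lt_of_le hq with heq | hlt
    · have : colOf hk hdk T 1 = j := Fin.ext (by rw [hcolq]; omega)
      rw [this, hc] at h1
      simp at h1
    · have := T.blue_row 1 (colOf hk hdk T 1) j 1 0 h1 hc (by rw [Fin.lt_def, hcolq]; omega)
      omega

noncomputable def stepTo (Tb : Xt n d k) (b : Fin 2) : Xt (n+1) d k :=
  if b = 0 then ⟨opBottom hk hdk Tb.1 Tb.2, opBottom_hb hk hdk Tb.1 Tb.2⟩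
  else if hs : Tb.1.entry 1 (colOf hk hdk Tb.1 1) = .blue 0 then
    ⟨opTop hk hdk Tb.1 Tb.2 hs, opTop_hb hk hdk Tb.1 Tb.2 hs⟩
  else ⟨opFlip hk hdk Tb.1 Tb.2, opFlip_hb hk hdk Tb.1 Tb.2⟩

noncomputable def stepFrom (T : Xt (n+1) d k) : Xt n d k × Fin 2 :=
  if h0 : (maxPos T.1).1 = 0 then
    if hs : T.1.entry 1 (maxPos T.1).2 = .blue 1 then
      (⟨opRm T.1 T.2 (fun _ => hs), opRm_hb T.1 T.2 (fun _ => hs)⟩, 0)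
    else
      (⟨opRmFlip T.1 T.2 h0, opRmFlip_hb T.1 T.2 h0⟩, 1)
  else
    (⟨opRm T.1 T.2 (fun hc => absurd hc h0), opRm_hb T.1 T.2 (fun hc => absurd hc h0)⟩, 1)

lemma stepTo_zero (Tb : Xt n d k) :
    stepTo hk hdk Tb 0 = ⟨opBottom hk hdk Tb.1 Tb.2, opBottom_hb hk hdk Tb.1 Tb.2⟩ := by
  unfold stepTo
  rw [if_pos rfl]

lemma stepTo_one_top (Tb : Xt n d k) (hs : Tb.1.entry 1 (colOf hk hdk Tb.1 1) = .blue 0) :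
    stepTo hk hdk Tb 1 = ⟨opTop hk hdk Tb.1 Tb.2 hs, opTop_hb hk hdk Tb.1 Tb.2 hs⟩ := by
  unfold stepTo
  rw [if_neg (by decide), dif_pos hs]

lemma stepTo_one_flip (Tb : Xt n d k) (hs : ¬ Tb.1.entry 1 (colOf hk hdk Tb.1 1) = .blue 0) :
    stepTo hk hdk Tb 1 = ⟨opFlip hk hdk Tb.1 Tb.2, opFlip_hb hk hdk Tb.1 Tb.2⟩ := by
  unfold stepTo
  rw [if_neg (by decide), dif_neg hs]

lemma maxPos_opBottom (T : PosLpTableau n d k) (hb : ∀ j, T.entry 0 j ≠ .blue 1) :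
    (maxPos (opBottom hk hdk T hb)).1 = 0 ∧
      (maxPos (opBottom hk hdk T hb)).2 = colOf hk hdk T 0 :=
  maxPos_uniq (opBottom hk hdk T hb) 0 (colOf hk hdk T 0) (by
    show opBottomE hk hdk T 0 (colOf hk hdk T 0) = .red (n+1)
    unfold opBottomE
    rw [if_pos ⟨rfl, rfl⟩])

lemma maxPos_opTop (T : PosLpTableau n d k) (hb : ∀ j, T.entry 0 j ≠ .blue 1)
    (hs : T.entry 1 (colOf hk hdk T 1) = .blue 0) :
    (maxPos (opTop hk hdk T hb hs)).1 = 1 ∧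
      (maxPos (opTop hk hdk T hb hs)).2 = colOf hk hdk T 1 :=
  maxPos_uniq (opTop hk hdk T hb hs) 1 (colOf hk hdk T 1) (by
    show opTopE hk hdk T 1 (colOf hk hdk T 1) = .red (n+1)
    unfold opTopE
    rw [if_pos ⟨rfl, rfl⟩])

lemma maxPos_opFlip (T : PosLpTableau n d k) (hb : ∀ j, T.entry 0 j ≠ .blue 1) :
    (maxPos (opFlip hk hdk T hb)).1 = 0 ∧
      (maxPos (opFlip hk hdk T hb)).2 = colOf hk hdk T 0 :=
  maxPos_uniq (opFlip hk hdk T hb) 0 (colOf hk hdk T 0) (by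
    show opFlipE hk hdk T 0 (colOf hk hdk T 0) = .red (n+1)
    unfold opFlipE
    rw [if_pos ⟨rfl, rfl⟩])

lemma top_blue1_colOf (T : PosLpTableau n d k) (hb : ∀ j, T.entry 0 j ≠ .blue 1) :
    T.entry 1 (colOf hk hdk T 0) = .blue 1 :=
  top_blue1 hk (by omega) T hb (colOf hk hdk T 0) (le_of_eq rfl)
    (by have := rcount_le T 0; show rcount T 0 < d - k; omega)

lemma step_left_inv (Tb : Xt n d k) (b : Fin 2) :
    stepFrom (stepTo hk hdk Tb b) = (Tb, b) := by
  obtain ⟨T, hb⟩ := Tb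
  rcases fin2 b with rfl | rfl
  · -- b = 0 : opBottom
    rw [stepTo_zero]
    set U := opBottom hk hdk T hb with hU
    have hm := maxPos_opBottom hk hdk T hb
    have hs : U.entry 1 (maxPos U).2 = .blue 1 := by
      rw [hm.2]
      show opBottomE hk hdk T 1 (colOf hk hdk T 0) = .blue 1
      unfold opBottomE
      rw [if_neg (by rintro ⟨h1, -⟩; exact absurd h1 (by decide))]
      exact top_blue1_colOf hk hdk T hb
    unfold stepFrom
    rw [dif_pos hm.1, dif_pos hs]
    refine Prod.ext ?_ rfl
    apply Subtype.ext
    apply PosLpTableau.ext'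
    funext i j
    show opRmE U i j = T.entry i j
    unfold opRmE
    rw [hm.1, hm.2]
    by_cases hc : i = 0 ∧ j = colOf hk hdk T 0
    · rw [if_pos hc, hc.1, hc.2]
      exact (bottom_blue hk (by omega) T hb (colOf hk hdk T 0) (le_of_eq rfl)).symm
    · rw [if_neg hc]
      show opBottomE hk hdk T i j = T.entry i j
      unfold opBottomE
      rw [if_neg hc]
  · -- b = 1
    by_cases hside : T.entry 1 (colOf hk hdk T 1) = .blue 0
    · -- opTop
      rw [stepTo_one_top hk hdk ⟨T, hb⟩ hside]
      set U := opTop hk hdk T hb hside with hU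
      have hm := maxPos_opTop hk hdk T hb hside
      unfold stepFrom
      rw [dif_neg (by rw [hm.1]; decide)]
      refine Prod.ext ?_ rfl
      apply Subtype.ext
      apply PosLpTableau.ext'
      funext i j
      show opRmE U i j = T.entry i j
      unfold opRmE
      rw [hm.1, hm.2]
      by_cases hc : i = 1 ∧ j = colOf hk hdk T 1
      · rw [if_pos hc, hc.1, hc.2]
        exact hside.symm
      · rw [if_neg hc]
        show opTopE hk hdk T i j = T.entry i j
        unfold opTopE
        rw [if_neg hc]
    · -- opFlip
      rw [stepTo_one_flip hk hdk ⟨T, hb⟩ hside]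
      set U := opFlip hk hdk T hb with hU
      have hm := maxPos_opFlip hk hdk T hb
      have hflip : U.entry 1 (colOf hk hdk T 0) = .blue 0 := by
        show opFlipE hk hdk T 1 (colOf hk hdk T 0) = .blue 0
        unfold opFlipE
        rw [if_neg (by rintro ⟨h1, -⟩; exact absurd h1 (by decide)),
          if_pos ⟨rfl, le_of_eq rfl, top_blue1_colOf hk hdk T hb⟩]
      have hs : ¬ U.entry 1 (maxPos U).2 = .blue 1 := by
        rw [hm.2, hflip]
        simp
      unfold stepFrom
      rw [dif_pos hm.1, dif_neg hs]
      refine Prod.ext ?_ rfl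
      apply Subtype.ext
      apply PosLpTableau.ext'
      funext i j
      show opRmFlipE U i j = T.entry i j
      unfold opRmFlipE
      rw [hm.1, hm.2]
      by_cases hc : i = 0 ∧ j = colOf hk hdk T 0
      · rw [if_pos hc, hc.1, hc.2]
        exact (bottom_blue hk (by omega) T hb (colOf hk hdk T 0) (le_of_eq rfl)).symm
      rw [if_neg hc]
      rcases fin2 i with rfl | rfl
      · -- bottom row, not the new cell
        have hU0 : U.entry 0 j = T.entry 0 j := by
          show opFlipE hk hdk T 0 j = T.entry 0 j
          unfold opFlipE
          rw [if_neg hc, if_neg (by rintro ⟨h1, -⟩; exact absurd h1 (by decide))]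
        rw [if_neg (by rintro ⟨h1, -⟩; exact absurd h1 (by decide))]
        exact hU0
      · -- top row
        by_cases hf : ((j : ℕ) ≤ rcount T 0 ∧ T.entry 1 j = .blue 1)
        · have hU1 : U.entry 1 j = .blue 0 := by
            show opFlipE hk hdk T 1 j = .blue 0
            unfold opFlipE
            rw [if_neg (by rintro ⟨h1, -⟩; exact absurd h1 (by decide)),
              if_pos ⟨rfl, hf.1, hf.2⟩]
          rw [if_pos ⟨rfl, hU1⟩]
          exact hf.2.symm
        · have hU1 : U.entry 1 j = T.entry 1 j := by
            show opFlipE hk hdk T 1 j = T.entry 1 j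
            unfold opFlipE
            rw [if_neg (by rintro ⟨h1, -⟩; exact absurd h1 (by decide)),
              if_neg (by rintro ⟨-, h2, h3⟩; exact hf ⟨h2, h3⟩)]
          rw [if_neg (by
            rintro ⟨-, h2⟩
            rw [hU1] at h2
            exact no_top_blue0 hk hdk T hside j h2)]
          exact hU1

end Step

section Step2

variable (hk : 2 ≤ k) (hdk : n + 1 + k ≤ d)
variable (T : PosLpTableau (n+1) d k)

lemma rm_rcount_maxrow (T' : PosLpTableau n d k)
    (h : ∀ (i : Fin 2) (j : Fin (d-1)) (v : ℕ), T'.entry i j = .red v ↔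
      (T.entry i j = .red v ∧ ¬((maxPos T).1 = i ∧ (maxPos T).2 = j))) :
    rcount T' (maxPos T).1 = ((maxPos T).2 : ℕ) := by
  have hlast := last_red T (maxPos T).1 (maxPos T).2 (maxPos_spec T)
  apply rcount_eq T' (maxPos T).1 _ (Nat.le_of_lt (maxPos T).2.isLt)
  intro j
  rw [← red_iff_lt T' (maxPos T).1 j]
  constructor
  · rintro ⟨v, hv⟩
    rw [h] at hv
    have h1 := (red_iff_lt T (maxPos T).1 j).1 ⟨v, hv.1⟩
    have h2 : ((maxPos T).2 : ℕ) ≠ (j : ℕ) := fun he => hv.2 ⟨rfl, Fin.ext he⟩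
    omega
  · intro hj
    obtain ⟨v, hv⟩ := (red_iff_lt T (maxPos T).1 j).2 (by omega)
    refine ⟨v, (h _ _ _).2 ⟨hv, ?_⟩⟩
    rintro ⟨-, hj2⟩
    rw [← hj2] at hj
    omega

lemma rm_rcount_other (T' : PosLpTableau n d k)
    (h : ∀ (i : Fin 2) (j : Fin (d-1)) (v : ℕ), T'.entry i j = .red v ↔
      (T.entry i j = .red v ∧ ¬((maxPos T).1 = i ∧ (maxPos T).2 = j)))
    (i : Fin 2) (hne : (maxPos T).1 ≠ i) : rcount T' i = rcount T i := by
  apply rcount_eq T' i _ (rcount_le_cols T i)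
  intro j
  rw [← red_iff_lt T' i j, ← red_iff_lt T i j]
  constructor
  · rintro ⟨v, hv⟩
    rw [h] at hv
    exact ⟨v, hv.1⟩
  · rintro ⟨v, hv⟩
    exact ⟨v, (h _ _ _).2 ⟨hv, fun hc => hne hc.1⟩⟩

lemma step_right_inv (U : Xt (n+1) d k) :
    stepTo hk hdk (stepFrom U).1 (stepFrom U).2 = U := by
  obtain ⟨T, hb⟩ := U
  by_cases h0 : (maxPos T).1 = 0
  · by_cases hs : T.entry 1 (maxPos T).2 = .blue 1
    · -- case A : remove from bottom, recover with opBottom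
      unfold stepFrom
      rw [dif_pos h0, dif_pos hs]
      show stepTo hk hdk ⟨opRm T hb fun _ => hs, opRm_hb T hb fun _ => hs⟩ 0 = ⟨T, hb⟩
      rw [stepTo_zero]
      apply Subtype.ext
      apply PosLpTableau.ext'
      funext i j
      have hrc : rcount (opRm T hb fun _ => hs) 0 = ((maxPos T).2 : ℕ) :=
        (congrArg (rcount (opRm T hb fun _ => hs)) h0.symm).trans
          (rm_rcount_maxrow T (opRm T hb fun _ => hs) (opRmE_red T))
      have hcol : colOf hk hdk (opRm T hb fun _ => hs) 0 = (maxPos T).2 :=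
        Fin.ext (by simpa [colOf] using hrc)
      show opBottomE hk hdk (opRm T hb fun _ => hs) i j = T.entry i j
      unfold opBottomE
      rw [hcol]
      by_cases hc : i = 0 ∧ j = (maxPos T).2
      · rw [if_pos hc, hc.1, hc.2]
        have := maxPos_spec T
        rw [h0] at this
        exact this.symm
      · rw [if_neg hc]
        show opRmE T i j = T.entry i j
        unfold opRmE
        rw [if_neg (by rintro ⟨ha, hbb⟩; exact hc ⟨by rw [ha, h0], hbb⟩)]
    · -- case B : remove-flip from bottom, recover with opFlip
      have hspec0 : T.entry 0 (maxPos T).2 = .red (n+1) := by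
        have := maxPos_spec T
        rwa [h0] at this
      have hq := max_red_bottom T (maxPos T).2 hspec0
      have hlast := last_red T 0 (maxPos T).2 hspec0
      have hc2n : ((maxPos T).2 : ℕ) ≤ n := by
        have := rcount_le T 0
        omega
      have hblue0 : T.entry 1 (maxPos T).2 = .blue 0 := by
        rcases top_blue hk hdk T (maxPos T).2 hq (by omega) with h | h
        · exact h
        · exact absurd h hs
      unfold stepFrom
      rw [dif_pos h0, dif_neg hs]
      show stepTo hk hdk ⟨opRmFlip T hb h0, opRmFlip_hb T hb h0⟩ 1 = ⟨T, hb⟩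
      have hrc0 : rcount (opRmFlip T hb h0) 0 = ((maxPos T).2 : ℕ) :=
        (congrArg (rcount (opRmFlip T hb h0)) h0.symm).trans
          (rm_rcount_maxrow T (opRmFlip T hb h0) (opRmFlipE_red T))
      have hrc1 : rcount (opRmFlip T hb h0) 1 = rcount T 1 :=
        rm_rcount_other T (opRmFlip T hb h0) (opRmFlipE_red T) 1 (by rw [h0]; decide)
      have hcolval : ((colOf hk hdk (opRmFlip T hb h0) 1 : Fin (d-1)) : ℕ) = rcount T 1 := by
        simp [colOf, hrc1]
      have hTq : T.entry 1 (colOf hk hdk (opRmFlip T hb h0) 1) = .blue 0 := by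
        rcases Nat.eq_or_lt_of_le hq with heq | hlt
        · have he : colOf hk hdk (opRmFlip T hb h0) 1 = (maxPos T).2 :=
            Fin.ext (by rw [hcolval]; omega)
          rw [he]
          exact hblue0
        · rcases top_blue hk hdk T (colOf hk hdk (opRmFlip T hb h0) 1)
              (le_of_eq hcolval.symm) (by rw [hcolval]; omega) with h | h
          · exact h
          · have := T.blue_row 1 (colOf hk hdk (opRmFlip T hb h0) 1) (maxPos T).2 1 0 h hblue0
              (by rw [Fin.lt_def, hcolval]; exact hlt)
            omega
      have hs' : ¬ (opRmFlip T hb h0).entry 1 (colOf hk hdk (opRmFlip T hb h0) 1) = .blue 0 := by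
        show ¬ opRmFlipE T 1 (colOf hk hdk (opRmFlip T hb h0) 1) = .blue 0
        unfold opRmFlipE
        rw [if_neg (by rintro ⟨ha, -⟩; rw [h0] at ha; exact absurd ha (by decide)),
          if_pos ⟨rfl, hTq⟩]
        simp
      rw [stepTo_one_flip hk hdk _ hs']
      apply Subtype.ext
      apply PosLpTableau.ext'
      funext i j
      show opFlipE hk hdk (opRmFlip T hb h0) i j = T.entry i j
      have hcol0 : colOf hk hdk (opRmFlip T hb h0) 0 = (maxPos T).2 :=
        Fin.ext (by simpa [colOf] using hrc0)
      unfold opFlipE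
      rw [hcol0]
      by_cases hc : i = 0 ∧ j = (maxPos T).2
      · rw [if_pos hc, hc.1, hc.2]
        exact hspec0.symm
      rw [if_neg hc]
      rcases fin2 i with rfl | rfl
      · -- bottom row
        rw [if_neg (by rintro ⟨ha, -⟩; exact absurd ha (by decide))]
        show opRmFlipE T 0 j = T.entry 0 j
        unfold opRmFlipE
        rw [if_neg (by rintro ⟨ha, hbb⟩; exact hc ⟨rfl, hbb⟩),
          if_neg (by rintro ⟨ha, -⟩; exact absurd ha (by decide))]
      · -- top row
        have hT'1 : (opRmFlip T hb h0).entry 1 j =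
            (if T.entry 1 j = .blue 0 then LpCell.blue 1 else T.entry 1 j) := by
          show opRmFlipE T 1 j = _
          unfold opRmFlipE
          rw [if_neg (by rintro ⟨ha, -⟩; rw [h0] at ha; exact absurd ha (by decide))]
          by_cases hz : T.entry 1 j = .blue 0
          · rw [if_pos ⟨rfl, hz⟩, if_pos hz]
          · rw [if_neg (by rintro ⟨-, h2⟩; exact hz h2), if_neg hz]
        by_cases hz : T.entry 1 j = .blue 0
        · -- flipped cell: flip it back
          have hjle : (j : ℕ) ≤ ((maxPos T).2 : ℕ) := by
            by_contra hgt
            push_neg at hgt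
            by_cases hg : (j : ℕ) < d - k
            · have := top_blue1 hk hdk T hb j (by omega) hg
              rw [hz] at this
              simp at this
            · have hgray : T.entry 1 j = .gray :=
                (gray_iff' hk (by omega) T 1 j).2 ⟨rfl, by omega⟩
              rw [hz] at hgray
              simp at hgray
          rw [if_pos ⟨rfl, by rw [hrc0]; exact hjle, by rw [hT'1, if_pos hz]⟩]
          exact hz.symm
        · -- untouched cell
          have hT'j : (opRmFlip T hb h0).entry 1 j = T.entry 1 j := by
            rw [hT'1, if_neg hz]
          rw [if_neg ?flipcond]
          · exact hT'j
          case flipcond =>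
            rintro ⟨-, hle, hb1⟩
            rw [hT'j] at hb1
            rw [hrc0] at hle
            rcases Nat.eq_or_lt_of_le hle with heq | hlt
            · have he : j = (maxPos T).2 := Fin.ext heq
              rw [he, hblue0] at hb1
              simp at hb1
            · have := T.blue_row 1 j (maxPos T).2 1 0 hb1 hblue0 (by rw [Fin.lt_def]; exact hlt)
              omega
  · -- case C : remove from top, recover with opTop
    have h1 : (maxPos T).1 = 1 := by
      rcases fin2 (maxPos T).1 with h | h
      · exact absurd h h0
      · exact h
    unfold stepFrom
    rw [dif_neg h0]
    show stepTo hk hdk ⟨opRm T hb fun hc => absurd hc h0,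
      opRm_hb T hb fun hc => absurd hc h0⟩ 1 = ⟨T, hb⟩
    have hrc1 : rcount (opRm T hb fun hc => absurd hc h0) 1 = ((maxPos T).2 : ℕ) :=
      (congrArg (rcount (opRm T hb fun hc => absurd hc h0)) h1.symm).trans
        (rm_rcount_maxrow T (opRm T hb fun hc => absurd hc h0) (opRmE_red T))
    have hcol1 : colOf hk hdk (opRm T hb fun hc => absurd hc h0) 1 = (maxPos T).2 :=
      Fin.ext (by simpa [colOf] using hrc1)
    have hs' : (opRm T hb fun hc => absurd hc h0).entry 1
        (colOf hk hdk (opRm T hb fun hc => absurd hc h0) 1) = .blue 0 := by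
      show opRmE T 1 (colOf hk hdk (opRm T hb fun hc => absurd hc h0) 1) = .blue 0
      unfold opRmE
      rw [hcol1, if_pos ⟨h1.symm, rfl⟩]
    rw [stepTo_one_top hk hdk _ hs']
    apply Subtype.ext
    apply PosLpTableau.ext'
    funext i j
    show opTopE hk hdk (opRm T hb fun hc => absurd hc h0) i j = T.entry i j
    unfold opTopE
    rw [hcol1]
    by_cases hc : i = 1 ∧ j = (maxPos T).2
    · rw [if_pos hc, hc.1, hc.2]
      have := maxPos_spec T
      rw [h1] at this
      exact this.symm
    · rw [if_neg hc]
      show opRmE T i j = T.entry i j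
      unfold opRmE
      rw [if_neg (by rintro ⟨ha, hbb⟩; exact hc ⟨by rw [ha, h1], hbb⟩)]

noncomputable def stepEquiv : Xt (n+1) d k ≃ (Xt n d k × Fin 2) where
  toFun := stepFrom
  invFun := fun p => stepTo hk hdk p.1 p.2
  left_inv := step_right_inv hk hdk
  right_inv := fun p => by
    obtain ⟨Tb, b⟩ := p
    exact step_left_inv hk hdk Tb b

end Step2

section Base

variable (hk : 2 ≤ k) (hd0 : k ≤ d)

def baseE (d k : ℕ) : Fin 2 → Fin (d-1) → LpCell :=
  fun i j => if i = 1 then (if d - k ≤ (j : ℕ) then .gray else .blue 1) else .blue 0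

omit hk hd0 in
lemma baseE_ne_red (i : Fin 2) (j : Fin (d-1)) (v : ℕ) : baseE d k i j ≠ .red v := by
  unfold baseE
  split_ifs <;> simp

def baseT : PosLpTableau 0 d k where
  entry := baseE d k
  gray_iff := by
    intro i j
    have harith : (d-1) - (k-1) = d - k := by omega
    rw [harith]
    unfold baseE
    rcases fin2 i with rfl | rfl
    · rw [if_neg (by decide)]
      constructor
      · intro h; simp at h
      · rintro ⟨h, -⟩; exact absurd h (by decide)
    · rw [if_pos rfl]
      by_cases hj : d - k ≤ (j : ℕ)
      · rw [if_pos hj]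
        simp [hj]
      · rw [if_neg hj]
        constructor
        · intro h; simp at h
        · rintro ⟨-, h⟩; exact absurd h hj
  red_left := fun i j j' v hv _ => absurd hv (baseE_ne_red i j v)
  red_down := fun i i' j v hv _ => absurd hv (baseE_ne_red i j v)
  red_vals := fun i j v hv => absurd hv (baseE_ne_red i j v)
  red_content := fun v h1 h2 => absurd h1 (by omega)
  red_row := fun i j j' a b ha _ _ => absurd ha (baseE_ne_red i j a)
  red_col := fun i i' j a b ha _ _ => absurd ha (baseE_ne_red i j a)
  blue_vals := by
    intro i j v hv
    unfold baseE at hv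
    split_ifs at hv
    all_goals injection hv with h
    all_goals omega
  blue_row := by
    intro i j j' a b ha hb hlt
    unfold baseE at ha hb
    rcases fin2 i with rfl | rfl
    · rw [if_neg (by decide)] at ha hb
      injection ha with h1
      injection hb with h2
      omega
    · rw [if_pos rfl] at ha hb
      split_ifs at ha hb
      all_goals injection ha with h1
      all_goals injection hb with h2
      all_goals omega
  blue_col := by
    intro i i' j a b ha hb hlt
    obtain ⟨rfl, rfl⟩ := fin2_lt hlt
    unfold baseE at ha hb
    rw [if_neg (by decide)] at ha
    rw [if_pos rfl] at hb
    injection ha with h1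
    split_ifs at hb
    all_goals injection hb with h2
    all_goals omega

lemma base_hb : ∀ j, (baseT hk hd0).entry 0 j ≠ .blue 1 := by
  intro j h
  have h2 : baseE d k 0 j = LpCell.blue 1 := h
  unfold baseE at h2
  rw [if_neg (by decide)] at h2
  injection h2 with h3
  omega

lemma base_unique (T : PosLpTableau 0 d k) (hb : ∀ j, T.entry 0 j ≠ .blue 1) :
    T = baseT hk hd0 := by
  apply PosLpTableau.ext'
  funext i j
  rcases fin2 i with rfl | rfl
  · have h1 : T.entry 0 j = .blue 0 :=
      bottom_blue hk hd0 T hb j (by have := rcount_le T 0; omega)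
    have h2 : (baseT hk hd0).entry 0 j = .blue 0 := by
      show baseE d k 0 j = _
      unfold baseE
      rw [if_neg (by decide)]
    rw [h1, h2]
  · by_cases hj : (j : ℕ) < d - k
    · have h1 : T.entry 1 j = .blue 1 :=
        top_blue1 hk (by omega) T hb j (by have := rcount_le T 0; omega) hj
      have h2 : (baseT hk hd0).entry 1 j = .blue 1 := by
        show baseE d k 1 j = _
        unfold baseE
        rw [if_pos rfl, if_neg (by omega)]
      rw [h1, h2]
    · have h1 : T.entry 1 j = .gray :=
        (gray_iff' hk hd0 T 1 j).2 ⟨rfl, by omega⟩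
      have h2 : (baseT hk hd0).entry 1 j = .gray := by
        show baseE d k 1 j = _
        unfold baseE
        rw [if_pos rfl, if_pos (by omega)]
      rw [h1, h2]

def baseEquiv : Xt 0 d k ≃ (Fin 0 → Fin 2) where
  toFun := fun _ => Fin.elim0
  invFun := fun _ => ⟨baseT hk hd0, base_hb hk hd0⟩
  left_inv := fun Tb => Subtype.ext (base_unique hk hd0 Tb.1 Tb.2).symm
  right_inv := fun f => funext fun i => i.elim0

end Base

theorem key (g d k : ℕ) (hk : 2 ≤ k) (h : g + k ≤ d) :
    Nonempty (Xt g d k ≃ (Fin g → Fin 2)) := by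
  induction g with
  | zero => exact ⟨baseEquiv hk (by omega)⟩
  | succ m ih =>
    obtain ⟨e⟩ := ih (by omega)
    exact ⟨(stepEquiv hk h).trans ((e.prodCongr (Equiv.refl (Fin 2))).trans
      ((Equiv.prodComm _ _).trans (Fin.consEquiv (fun _ : Fin (m+1) => Fin 2))))⟩

end Stmt16

/-- If d ≥ g + k, the positive L'-tableaux with parameters (g,d,k) having no blue
1 in the bottom row are in bijection with binary sequences of length g; in
particular there are 2^g of them. -/
theorem stmt_16 (g d k : ℕ) (hk : 2 ≤ k) (h : g + k ≤ d) :
    Nonempty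
      ({T : PosLpTableau g d k // ∀ j : Fin (d - 1), T.entry 0 j ≠ LpCell.blue 1} ≃
        (Fin g → Fin 2)) ∧
      Nat.card {T : PosLpTableau g d k //
        ∀ j : Fin (d - 1), T.entry 0 j ≠ LpCell.blue 1} = 2 ^ g := by
  obtain ⟨e⟩ := Stmt16.key g d k hk h
  refine ⟨⟨e⟩, ?_⟩
  rw [Nat.card_congr e, Nat.card_fun]
  simp [Nat.card_eq_fintype_card]
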